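/- Let n > d be positive integers, m > 1 an integer, and a_{ij} (1 ≤ i ≤ d, 1 ≤ j ≤ n) integers. Assume that the d × n matrix A with first row (a₁₁, m·a₁₂, …, m·a₁ₙ) and i-th row (a_{i1}, …, a_{in}) for 2 ≤ i ≤ d determines a surjection ℤⁿ → ℤ^d, and that the d × n matrix with first row (1, a₁₂, …, a₁ₙ) and i-th row (0, a_{i2}, …, a_{in}) for 2 ≤ i ≤ d also determines a surjection ℤⁿ → ℤ^d. Define the (d+m−1) × (n+m−1) integer matrix A′ as follows: row 1 is (a₁₁, 0, …, 0, a₁₂, …, a₁ₙ) (with m−1 zeros in columns 2 through m); for 2 ≤ i ≤ d, row i is (a_{i1}, a_{i1}, …, a_{i1}, a_{i2}, …, a_{in}) (with a_{i1} repeated in columns 1 through m); for 1 ≤ k ≤ m−1, row d+k has entry 1 in column k, entry −1 in column k+1, and 0 elsewhere. Then A′ determines a surjection ℤ^{n+m−1} → ℤ^{d+m−1}. -/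

import Mathlib

theorem stmt_8 (d n m : ℕ) (hd : 0 < d) (hdn : d < n) (hm : 1 < m)
    (a : Matrix (Fin d) (Fin n) ℤ)
    (hAsurj : Function.Surjective (Matrix.mulVec (fun (i : Fin d) (j : Fin n) =>
      if (i : ℕ) = 0 ∧ (j : ℕ) ≠ 0 then (m : ℤ) * a i j else a i j)))
    (hA1surj : Function.Surjective (Matrix.mulVec (fun (i : Fin d) (j : Fin n) =>
      if (j : ℕ) = 0 then (if (i : ℕ) = 0 then 1 else 0) else a i j)))
    (A' : Matrix (Fin (d + m - 1)) (Fin (n + m - 1)) ℤ)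
    (hA' : ∀ (i : Fin (d + m - 1)) (j : Fin (n + m - 1)),
      A' i j =
        if hi : (i : ℕ) < d then
          if (j : ℕ) < m then
            (if (i : ℕ) = 0 then
              (if (j : ℕ) = 0 then a ⟨(i : ℕ), hi⟩ ⟨0, by omega⟩ else 0)
            else a ⟨(i : ℕ), hi⟩ ⟨0, by omega⟩)
          else a ⟨(i : ℕ), hi⟩ ⟨(j : ℕ) - m + 1, by have := j.isLt; omega⟩
        else
          if (j : ℕ) = (i : ℕ) - d then 1
          else if (j : ℕ) = (i : ℕ) - d + 1 then -1 else 0) :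
    Function.Surjective A'.mulVec := by
  have hn : 0 < n := hd.trans hdn
  intro y
  set Y : ℕ → ℤ := fun t => if h : t < d + m - 1 then y ⟨t, h⟩ else 0 with hYdef
  set p : ℕ → ℤ := fun k => ∑ l ∈ Finset.range k, Y (d + l) with hpdef
  set P : ℤ := ∑ k ∈ Finset.range m, p k with hPdef
  set j0 : Fin n := ⟨0, hn⟩ with hj0def
  set z : Fin d → ℤ := fun i => Y i + (if (i : ℕ) = 0 then 0 else a i j0 * P) with hzdef
  obtain ⟨u, hu⟩ := hAsurj (fun i => if (i : ℕ) = 0 then (1 : ℤ) else 0)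
  obtain ⟨u1, hu1⟩ := hA1surj z
  have hu' : ∀ i : Fin d,
      (∑ j : Fin n, (if (i : ℕ) = 0 ∧ (j : ℕ) ≠ 0 then (m : ℤ) * a i j else a i j) * u j)
        = (if (i : ℕ) = 0 then 1 else 0) := by
    intro i
    have := congrFun hu i
    simpa [Matrix.mulVec, dotProduct] using this
  have hu1' : ∀ i : Fin d,
      (∑ j : Fin n, (if (j : ℕ) = 0 then (if (i : ℕ) = 0 then (1 : ℤ) else 0) else a i j) * u1 j)
        = z i := by
    intro i
    have := congrFun hu1 i
    simpa [Matrix.mulVec, dotProduct] using this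
  set w : Fin n → ℤ := fun j => if (j : ℕ) = 0 then u j else m * u j with hwdef
  set v1 : Fin n → ℤ := fun j => if (j : ℕ) = 0 then 0 else u1 j with hv1def
  set uu : Fin n → ℤ := fun j => u1 j0 * w j + v1 j with huudef
  -- the "C" matrix computation
  have hCw : ∀ i : Fin d,
      (∑ j : Fin n, (if (j : ℕ) = 0 ∧ (i : ℕ) ≠ 0 then (m : ℤ) * a i j else a i j) * w j)
        = (if (i : ℕ) = 0 then 1 else 0) := by
    intro i
    by_cases hi0 : (i : ℕ) = 0
    · rw [← hu' i]
      refine Finset.sum_congr rfl fun j _ => ?_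
      by_cases hj0 : (j : ℕ) = 0 <;> simp [hwdef, hi0, hj0] <;> ring
    · have key : (∑ j : Fin n, (if (j : ℕ) = 0 ∧ (i : ℕ) ≠ 0 then (m : ℤ) * a i j else a i j) * w j)
          = m * ∑ j : Fin n, (if (i : ℕ) = 0 ∧ (j : ℕ) ≠ 0 then (m : ℤ) * a i j else a i j) * u j := by
        rw [Finset.mul_sum]
        refine Finset.sum_congr rfl fun j _ => ?_
        by_cases hj0 : (j : ℕ) = 0 <;> simp [hwdef, hi0, hj0] <;> ring
      rw [key, hu' i]
      simp [hi0]
  have hCv1 : ∀ i : Fin d,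
      (∑ j : Fin n, (if (j : ℕ) = 0 ∧ (i : ℕ) ≠ 0 then (m : ℤ) * a i j else a i j) * v1 j)
        = z i - (if (i : ℕ) = 0 then 1 else 0) * u1 j0 := by
    intro i
    have hsplit : ∀ j : Fin n,
        (if (j : ℕ) = 0 ∧ (i : ℕ) ≠ 0 then (m : ℤ) * a i j else a i j) * v1 j
          = (if (j : ℕ) = 0 then (if (i : ℕ) = 0 then (1 : ℤ) else 0) else a i j) * u1 j
            - (if j = j0 then (if (i : ℕ) = 0 then (1 : ℤ) else 0) * u1 j else 0) := by
      intro j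
      by_cases hj0 : (j : ℕ) = 0
      · have hjj : j = j0 := Fin.ext hj0
        subst hjj
        simp [hv1def, hj0]
      · have hjj : ¬ j = j0 := fun h => hj0 (by rw [h])
        simp [hv1def, hj0, hjj]
    rw [Finset.sum_congr rfl fun j _ => hsplit j, Finset.sum_sub_distrib, hu1' i,
      Finset.sum_ite_eq']
    simp
  have hC : ∀ i : Fin d,
      (∑ j : Fin n, (if (j : ℕ) = 0 ∧ (i : ℕ) ≠ 0 then (m : ℤ) * a i j else a i j) * uu j)
        = z i := by
    intro i
    have hspl : (∑ j : Fin n, (if (j : ℕ) = 0 ∧ (i : ℕ) ≠ 0 then (m : ℤ) * a i j else a i j) * uu j)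
        = u1 j0 * (∑ j : Fin n, (if (j : ℕ) = 0 ∧ (i : ℕ) ≠ 0 then (m : ℤ) * a i j else a i j) * w j)
          + ∑ j : Fin n, (if (j : ℕ) = 0 ∧ (i : ℕ) ≠ 0 then (m : ℤ) * a i j else a i j) * v1 j := by
      rw [Finset.mul_sum, ← Finset.sum_add_distrib]
      refine Finset.sum_congr rfl fun j _ => ?_
      simp only [huudef]
      ring
    rw [hspl, hCw i, hCv1 i]
    ring
  -- ℕ-indexed version of the C computation
  set H : Fin d → ℕ → ℤ := fun i k =>
    if h : k < n then (if k = 0 ∧ (i : ℕ) ≠ 0 then (m : ℤ) * a i ⟨k, h⟩ else a i ⟨k, h⟩) * uu ⟨k, h⟩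
    else 0 with hHdef
  have hHrange : ∀ i : Fin d, ∑ k ∈ Finset.range n, H i k = z i := by
    intro i
    rw [← Fin.sum_univ_eq_sum_range (H i) n, ← hC i]
    refine Finset.sum_congr rfl fun j _ => ?_
    simp [hHdef, j.isLt]
  have hH0 : ∀ i : Fin d, H i 0
      = (if (i : ℕ) ≠ 0 then (m : ℤ) * a i j0 else a i j0) * uu j0 := by
    intro i
    by_cases hi0 : (i : ℕ) = 0 <;> simp [hHdef, hn, hj0def, hi0]
  have hHtail : ∀ i : Fin d, ∑ k ∈ Finset.Ico 1 n, H i k = z i - H i 0 := by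
    intro i
    have h1n : (1:ℕ) ≤ n := hn
    have hc := Finset.sum_Ico_consecutive (H i) (Nat.zero_le 1) h1n
    rw [← Finset.range_eq_Ico, ← Finset.range_eq_Ico] at hc
    have hfirst : ∑ k ∈ Finset.range 1, H i k = H i 0 := Finset.sum_range_one _
    rw [hfirst, hHrange i] at hc
    omega
  -- the candidate preimage
  set X : ℕ → ℤ := fun t =>
    if t < m then uu j0 - p t
    else (if h : t - m + 1 < n then uu ⟨t - m + 1, h⟩ else 0) with hXdef
  refine ⟨fun j => X j, ?_⟩
  funext i
  have hmv : A'.mulVec (fun j => X ↑j) i = ∑ j : Fin (n + m - 1), A' i j * X ↑j := by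
    simp [Matrix.mulVec, dotProduct]
  rw [hmv]
  by_cases hi : (i : ℕ) < d
  · set i' : Fin d := ⟨(i : ℕ), hi⟩ with hi'def
    set G : ℕ → ℤ := fun t =>
      (if t < m then (if (i : ℕ) = 0 then (if t = 0 then a i' j0 else 0) else a i' j0)
       else (if h : t - m + 1 < n then a i' ⟨t - m + 1, h⟩ else 0)) * X t with hGdef
    have hterm : ∀ j : Fin (n + m - 1), A' i j * X ↑j = G ↑j := by
      intro j
      rw [hA' i j, dif_pos hi]
      by_cases hjm : (j : ℕ) < m
      · simp [hGdef, hjm, hi'def, hj0def]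
      · have hlt : (j : ℕ) - m + 1 < n := by have := j.isLt; omega
        simp [hGdef, hjm, hlt, hi'def]
    rw [Finset.sum_congr rfl fun j _ => hterm j, Fin.sum_univ_eq_sum_range G (n + m - 1)]
    have hmle : m ≤ n + m - 1 := by omega
    have hsplit := Finset.sum_Ico_consecutive G (Nat.zero_le m) hmle
    rw [← Finset.range_eq_Ico, ← Finset.range_eq_Ico] at hsplit
    rw [← hsplit]
    have hB : ∑ t ∈ Finset.Ico m (n + m - 1), G t = z i' - H i' 0 := by
      rw [← hHtail i', Finset.sum_Ico_eq_sum_range, Finset.sum_Ico_eq_sum_range]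
      have hnm : n + m - 1 - m = n - 1 := by omega
      rw [hnm]
      refine Finset.sum_congr rfl fun t ht => ?_
      have htn : t < n - 1 := Finset.mem_range.mp ht
      have e : 1 + t = t + 1 := Nat.add_comm 1 t
      have h1 : m + t - m + 1 = t + 1 := by omega
      have h2 : ¬ (m + t < m) := by omega
      have h3 : t + 1 < n := by omega
      simp [hGdef, hHdef, hXdef, h1, h2, h3, e]
    by_cases hi0 : (i : ℕ) = 0
    · have hA0 : ∑ t ∈ Finset.range m, G t = a i' j0 * uu j0 := by
        rw [Finset.sum_eq_single_of_mem 0 (Finset.mem_range.mpr (by omega))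
          (fun b hb hb0 => by simp [hGdef, Finset.mem_range.mp hb, hi0, hb0])]
        simp [hGdef, hXdef, hi0, hpdef, show (0:ℕ) < m by omega]
      have hH0' : H i' 0 = a i' j0 * uu j0 := by rw [hH0 i']; simp [hi'def, hi0]
      have hz' : z i' = y i := by
        have hie : ∀ h : (0:ℕ) < d + m - 1, y ⟨0, h⟩ = y i := fun h => by
          congr 1
          exact Fin.ext (by simp [hi0])
        simp [hzdef, hYdef, hi'def, hi0, hie]
        intro h'
        exact absurd h' (by omega)
      rw [hA0, hB, hH0', ← hz']
      ring
    · have hA1 : ∑ t ∈ Finset.range m, G t = m * (a i' j0 * uu j0) - a i' j0 * P := by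
        have hc : ∀ t ∈ Finset.range m, G t = a i' j0 * uu j0 - a i' j0 * p t := by
          intro t ht
          have htm := Finset.mem_range.mp ht
          simp [hGdef, hXdef, hi0, htm]
          ring
        rw [Finset.sum_congr rfl hc, Finset.sum_sub_distrib, Finset.sum_const,
          Finset.card_range, ← Finset.mul_sum, ← hPdef, nsmul_eq_mul]
      have hH0' : H i' 0 = m * a i' j0 * uu j0 := by rw [hH0 i']; simp [hi'def, hi0]
      have hz' : z i' = y i + a i' j0 * P := by simp [hzdef, hYdef, hi'def, hi0, i.isLt]
      rw [hA1, hB, hH0', hz']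
      ring
  · -- bottom rows
    have hk : (i : ℕ) - d < m - 1 := by have := i.isLt; omega
    set k : ℕ := (i : ℕ) - d with hkdef
    have hkN : k < n + m - 1 := by omega
    have hk1N : k + 1 < n + m - 1 := by omega
    set jk : Fin (n + m - 1) := ⟨k, hkN⟩ with hjkdef
    set jk1 : Fin (n + m - 1) := ⟨k + 1, hk1N⟩ with hjk1def
    have hterm : ∀ j : Fin (n + m - 1), A' i j * X ↑j
        = (if j = jk then X k else 0) + (if j = jk1 then -(X (k + 1)) else 0) := by
      intro j
      rw [hA' i j, dif_neg hi]
      by_cases h1 : j = jk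
      · subst h1
        have : ¬ (jk = jk1) := by simp [hjkdef, hjk1def]
        simp [hjkdef, hjk1def, ← hkdef]
      · by_cases h2 : j = jk1
        · subst h2
          have hne : ¬ ((jk1 : ℕ) = k) := by simp [hjk1def]
          simp [hjk1def, hne, h1, hjkdef, ← hkdef]
        · have hne1 : ¬ ((j : ℕ) = k) := fun h => h1 (Fin.ext (by simpa [hjkdef] using h))
          have hne2 : ¬ ((j : ℕ) = k + 1) := fun h => h2 (Fin.ext (by simpa [hjk1def] using h))
          simp [hne1, hne2, h1, h2, ← hkdef]
    rw [Finset.sum_congr rfl fun j _ => hterm j, Finset.sum_add_distrib,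
      Finset.sum_ite_eq', Finset.sum_ite_eq']
    have hXk : X k = uu j0 - p k := by simp [hXdef, show k < m by omega]
    have hXk1 : X (k + 1) = uu j0 - p (k + 1) := by simp [hXdef, show k + 1 < m by omega]
    have hpk : p (k + 1) = p k + Y (d + k) := by
      simp [hpdef, Finset.sum_range_succ]
    have hYdk : Y (d + k) = y i := by
      have hlt : d + k < d + m - 1 := by omega
      have : (⟨d + k, hlt⟩ : Fin (d + m - 1)) = i := Fin.ext (by simp; omega)
      simp [hYdef, hlt, this]
    simp only [Finset.mem_univ, if_true, hXk, hXk1, hpk, hYdk]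
    ring
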